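/- Let A be a scaled Lorentz transformation (a real 4×4 matrix). Then the 3×3 submatrix of A formed by its last three rows and last three columns is invertible. -/

import Mathlib

/-- The Minkowski quadratic form on ℝ⁴: q(t,x,y,z) = x² + y² + z² − t². -/
def mink (x : Fin 4 → ℝ) : ℝ := (x 1)^2 + (x 2)^2 + (x 3)^2 - (x 0)^2

/-- A real 4×4 matrix is a Lorentz transformation if it preserves the Minkowski form. -/
def IsLorentz (A : Matrix (Fin 4) (Fin 4) ℝ) : Prop :=
  ∀ x : Fin 4 → ℝ, mink (A.mulVec x) = mink x

/-- A scaled Lorentz transformation: a nonzero multiple of a Lorentz transformation. -/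
def IsScaledLorentz (A : Matrix (Fin 4) (Fin 4) ℝ) : Prop :=
  ∃ s : ℝ, s ≠ 0 ∧ ∃ B : Matrix (Fin 4) (Fin 4) ℝ, IsLorentz B ∧ A = s • B

theorem lorentz_block (B : Matrix (Fin 4) (Fin 4) ℝ) (hB : IsLorentz B) :
    (B.submatrix (Fin.succ : Fin 3 → Fin 4) (Fin.succ : Fin 3 → Fin 4)).det ≠ 0 := by
  intro hdet
  obtain ⟨v, hv, hMv⟩ := (Matrix.exists_mulVec_eq_zero_iff).mpr hdet
  set x : Fin 4 → ℝ := ![0, v 0, v 1, v 2] with hxdef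
  have key : ∀ i : Fin 3,
      B.mulVec x (Fin.succ i) = B i.succ 1 * v 0 + B i.succ 2 * v 1 + B i.succ 3 * v 2 := by
    intro i
    simp [Matrix.mulVec, dotProduct, Fin.sum_univ_four, hxdef]
  have key2 : ∀ i : Fin 3, B.mulVec x (Fin.succ i) = 0 := by
    intro i
    have h := congrFun hMv i
    simp [Matrix.mulVec, dotProduct, Fin.sum_univ_three] at h
    rw [key i]
    have e1 : (Fin.succ 0 : Fin 4) = 1 := rfl
    have e2 : (Fin.succ 1 : Fin 4) = 2 := rfl
    have e3 : (Fin.succ 2 : Fin 4) = 3 := rfl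
    linarith [h]
  have hmb : mink (B.mulVec x) = - (B.mulVec x 0)^2 := by
    have h1 := key2 0
    have h2 := key2 1
    have h3 := key2 2
    have e1 : (Fin.succ 0 : Fin 4) = 1 := rfl
    have e2 : (Fin.succ 1 : Fin 4) = 2 := rfl
    have e3 : (Fin.succ 2 : Fin 4) = 3 := rfl
    rw [e1] at h1; rw [e2] at h2; rw [e3] at h3
    simp [mink, h1, h2, h3]
  have hmx : mink x = (v 0)^2 + (v 1)^2 + (v 2)^2 := by
    simp [mink, hxdef]
  have heq := hB x
  rw [hmb, hmx] at heq
  apply hv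
  have hb := sq_nonneg (B.mulVec x 0)
  funext i
  fin_cases i <;> simp <;>
    nlinarith [sq_nonneg (v 0), sq_nonneg (v 1), sq_nonneg (v 2)]

theorem scaled_lorentz_lower_block_invertible (A : Matrix (Fin 4) (Fin 4) ℝ)
    (hA : IsScaledLorentz A) :
    IsUnit (A.submatrix (Fin.succ : Fin 3 → Fin 4) (Fin.succ : Fin 3 → Fin 4)).det := by
  obtain ⟨s, hs, B, hB, rfl⟩ := hA
  rw [Matrix.submatrix_smul, Pi.smul_apply, Pi.smul_apply, Matrix.det_smul, isUnit_iff_ne_zero]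
  exact mul_ne_zero (pow_ne_zero _ hs) (lorentz_block B hB)
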